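/- For a, b in the open unit disk with a ≠ b, the point z = (b(1−|a|²) + a(1−|b|²)) / (1 − |a|²|b|² + |1 − a·conj(b)|·√((1−|a|²)(1−|b|²))) lies in the open unit disk and is the hyperbolic midpoint of a and b: sinh²(ρ(a,z)/2) = sinh²(ρ(z,b)/2), i.e., |a−z|²/((1−|a|²)(1−|z|²)) = |z−b|²/((1−|z|²)(1−|b|²)), where ρ is the hyperbolic metric of the unit disk, and moreover ρ(a,z) = ρ(a,b)/2. -/

import Mathlib

open Complex
set_option maxHeartbeats 1000000

lemma absq_comb (a b : ℂ) (al be : ℝ) :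
    ‖b * (al:ℂ) + a * (be:ℂ)‖ ^ 2 =
      ‖b‖ ^ 2 * al ^ 2 + ‖a‖ ^ 2 * be ^ 2
        + 2 * (a * starRingEnd ℂ b).re * al * be := by
  simp only [Complex.sq_norm, Complex.normSq_apply, Complex.add_re, Complex.add_im,
    Complex.mul_re, Complex.mul_im, Complex.ofReal_re, Complex.ofReal_im,
    Complex.conj_re, Complex.conj_im]
  ring

lemma absq_a_sub (a b : ℂ) (al be t : ℝ) :
    ‖a * (t:ℂ) - (b * (al:ℂ) + a * (be:ℂ))‖ ^ 2 =
      ‖a‖ ^ 2 * t ^ 2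
        - 2 * t * (al * (a * starRingEnd ℂ b).re + be * ‖a‖ ^ 2)
        + (‖b‖ ^ 2 * al ^ 2 + ‖a‖ ^ 2 * be ^ 2
            + 2 * (a * starRingEnd ℂ b).re * al * be) := by
  simp only [Complex.sq_norm, Complex.normSq_apply, Complex.add_re, Complex.add_im,
    Complex.sub_re, Complex.sub_im,
    Complex.mul_re, Complex.mul_im, Complex.ofReal_re, Complex.ofReal_im,
    Complex.conj_re, Complex.conj_im]
  ring

lemma absq_sub_b (a b : ℂ) (al be t : ℝ) :
    ‖(b * (al:ℂ) + a * (be:ℂ)) - b * (t:ℂ)‖ ^ 2 =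
      ‖b‖ ^ 2 * t ^ 2
        - 2 * t * (al * ‖b‖ ^ 2 + be * (a * starRingEnd ℂ b).re)
        + (‖b‖ ^ 2 * al ^ 2 + ‖a‖ ^ 2 * be ^ 2
            + 2 * (a * starRingEnd ℂ b).re * al * be) := by
  simp only [Complex.sq_norm, Complex.normSq_apply, Complex.add_re, Complex.add_im,
    Complex.sub_re, Complex.sub_im,
    Complex.mul_re, Complex.mul_im, Complex.ofReal_re, Complex.ofReal_im,
    Complex.conj_re, Complex.conj_im]
  ring

lemma absq_one_sub (a b : ℂ) :
    ‖1 - a * starRingEnd ℂ b‖ ^ 2 =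
      1 - 2 * (a * starRingEnd ℂ b).re + ‖a‖ ^ 2 * ‖b‖ ^ 2 := by
  simp only [Complex.sq_norm, Complex.normSq_apply, Complex.sub_re, Complex.sub_im,
    Complex.mul_re, Complex.mul_im, Complex.one_re, Complex.one_im,
    Complex.conj_re, Complex.conj_im]
  ring

lemma absq_sub' (a b : ℂ) :
    ‖a - b‖ ^ 2 =
      ‖a‖ ^ 2 + ‖b‖ ^ 2 - 2 * (a * starRingEnd ℂ b).re := by
  simp only [Complex.sq_norm, Complex.normSq_apply, Complex.sub_re, Complex.sub_im,
    Complex.mul_re, Complex.mul_im, Complex.conj_re, Complex.conj_im]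
  ring

lemma algI1 (p q r A s : ℝ) (hs2 : s^2 = (1-p)*(1-q)) (hA2 : A^2 = 1 - 2*r + p*q) :
    (1-p*q+A*s)^2 - (q*(1-p)^2+p*(1-q)^2+2*r*(1-p)*(1-q)) = 2*A*s*(1-p*q+A*s) := by
  linear_combination ((-1)*A^2) * hs2 + ((-1) + q + p + (-1)*p*q) * hA2

lemma algI2 (p q r A s : ℝ) (hs2 : s^2 = (1-p)*(1-q)) (hA2 : A^2 = 1 - 2*r + p*q) :
    (1-q) * (p*(1-p*q+A*s)^2 - 2*(1-p*q+A*s)*((1-p)*r+(1-q)*p)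
        + (q*(1-p)^2+p*(1-q)^2+2*r*(1-p)*(1-q))) =
    (1-p) * (q*(1-p*q+A*s)^2 - 2*(1-p*q+A*s)*((1-p)*q+(1-q)*r)
        + (q*(1-p)^2+p*(1-q)^2+2*r*(1-p)*(1-q))) := by
  linear_combination ((-1)*A^2*q + A^2*p) * hs2 + ((-1)*q + q^2 + p + (-1)*p*q^2 + (-1)*p^2 + p^2*q) * hA2

lemma algI3 (p q r A s : ℝ) (hs2 : s^2 = (1-p)*(1-q)) (hA2 : A^2 = 1 - 2*r + p*q) :
    (p+q-2*r) * A^2 * (1-p)^2 * (1-p*q+A*s)^2 =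
      (p*(1-p*q+A*s)^2 - 2*(1-p*q+A*s)*((1-p)*r+(1-q)*p)
          + (q*(1-p)^2+p*(1-q)^2+2*r*(1-p)*(1-q)))
        * (2*A*s*(1-p)*(1-p*q+A*s)
          + (p*(1-p*q+A*s)^2 - 2*(1-p*q+A*s)*((1-p)*r+(1-q)*p)
              + (q*(1-p)^2+p*(1-q)^2+2*r*(1-p)*(1-q)))) := by
  linear_combination (4*A^2*r + (-4)*A^2*r^2 + (-2)*A^2*q + 4*A^2*q*r + (-8)*A^2*p*r + 8*A^2*p*r^2 + (-4)*A^2*p*q*r + (-2)*A^2*p*q^2 + 4*A^2*p^2*r + (-4)*A^2*p^2*r^2 + 6*A^2*p^2*q + (-4)*A^2*p^2*q*r + 4*A^2*p^2*q^2 + (-4)*A^2*p^3*q + 4*A^2*p^3*q*r + (-2)*A^2*p^3*q^2 + (-2)*A^4*r + A^4*q + (-1)*A^4*p + 4*A^4*p*r + A^4*p^2 + (-2)*A^4*p^2*r + (-2)*A^4*p^2*q + A^4*p^3*q + 4*s*A^3*r + (-2)*s*A^3*p + (-4)*s*A^3*p*r + (-4)*s*A^3*p*q + 2*s*A^3*p^2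 + 6*s*A^3*p^2*q + (-2)*s*A^3*p^3*q + (-2)*s^2*A^4*p + s^2*A^4*p^2) * hs2 + (q^2 + (-2)*q^2*r + (-4)*p*q^2 + 8*p*q^2*r + p*q^3 + 6*p^2*q^2 + (-12)*p^2*q^2*r + (-4)*p^2*q^3 + (-4)*p^3*q^2 + 8*p^3*q^2*r + 6*p^3*q^3 + p^4*q^2 + (-2)*p^4*q^2*r + (-4)*p^4*q^3 + p^5*q^3 + (-2)*A^2*r + A^2*q + 2*A^2*q*r + (-1)*A^2*q^2 + (-1)*A^2*p + 6*A^2*p*r + (-6)*A^2*p*q*r + A^2*p*q^2 + 2*A^2*p^2 + (-6)*A^2*p^2*r + (-4)*A^2*p^2*q + 6*A^2*p^2*q*r + 2*A^2*p^2*q^2 + (-1)*A^2*p^3 + 2*A^2*p^3*r + 4*A^2*p^3*q + (-2)*A^2*p^3*q*r + (-3)*A^2*p^3*q^2 + (-1)*A^2*p^4*q + A^2*p^4*q^2 + 2*s*A*q + (-4)*s*A*q*r + (-6)*s*A*p*q + 12*s*A*p*q*r + 2*s*A*p*q^2 + 6*s*A*p^2*q + (-12)*s*A*p^2*q*r + (-6)*s*A*p^2*q^2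 + (-2)*s*A*p^3*q + 4*s*A*p^3*q*r + 6*s*A*p^3*q^2 + (-2)*s*A*p^4*q^2) * hA2

/-- The hyperbolic metric of the unit disk. -/
noncomputable def hypDist (x y : ℂ) : ℝ :=
  2 * Real.arsinh (‖x - y‖ /
    Real.sqrt ((1 - ‖x‖ ^ 2) * (1 - ‖y‖ ^ 2)))

lemma core (a b : ℂ) (p q r A s : ℝ)
    (hpdef : p = ‖a‖ ^ 2) (hqdef : q = ‖b‖ ^ 2)
    (hrdef : r = (a * starRingEnd ℂ b).re)
    (hAdef : A = ‖1 - a * starRingEnd ℂ b‖)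
    (hsdef : s = Real.sqrt ((1 - p) * (1 - q)))
    (hp1 : p < 1) (hq1 : q < 1) (hab : a ≠ b) :
    ‖(b * (1 - (p:ℂ)) + a * (1 - (q:ℂ))) / ((1-p*q+A*s:ℝ):ℂ)‖ < 1 ∧
      ‖a - (b * (1 - (p:ℂ)) + a * (1 - (q:ℂ))) / ((1-p*q+A*s:ℝ):ℂ)‖ ^ 2 /
          ((1-p) * (1 - ‖(b * (1 - (p:ℂ)) + a * (1 - (q:ℂ))) / ((1-p*q+A*s:ℝ):ℂ)‖ ^ 2)) =
        ‖(b * (1 - (p:ℂ)) + a * (1 - (q:ℂ))) / ((1-p*q+A*s:ℝ):ℂ) - b‖ ^ 2 /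
          ((1 - ‖(b * (1 - (p:ℂ)) + a * (1 - (q:ℂ))) / ((1-p*q+A*s:ℝ):ℂ)‖ ^ 2) * (1-q)) ∧
      hypDist a ((b * (1 - (p:ℂ)) + a * (1 - (q:ℂ))) / ((1-p*q+A*s:ℝ):ℂ)) = hypDist a b / 2 := by
  set z : ℂ := (b * (1 - (p:ℂ)) + a * (1 - (q:ℂ))) / ((1-p*q+A*s:ℝ):ℂ) with hz
  have hz2 : z = (b * ((1-p:ℝ):ℂ) + a * ((1-q:ℝ):ℂ)) / ((1-p*q+A*s:ℝ):ℂ) := by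
    rw [hz]; push_cast; ring
  have hp0 : 0 ≤ p := by rw [hpdef]; positivity
  have hq0 : 0 ≤ q := by rw [hqdef]; positivity
  have hal : 0 < 1 - p := by linarith
  have hbe : 0 < 1 - q := by linarith
  have hs2 : s ^ 2 = (1-p) * (1-q) := by
    rw [hsdef]; exact Real.sq_sqrt (by positivity)
  have hs0 : 0 < s := by rw [hsdef]; exact Real.sqrt_pos.2 (by positivity)
  have hA2 : A ^ 2 = 1 - 2*r + p*q := by
    rw [hAdef, hpdef, hqdef, hrdef]; exact absq_one_sub a b
  have habs : 0 < ‖a - b‖ := norm_pos_iff.mpr (sub_ne_zero.2 hab)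
  have hm' : ‖a - b‖ ^ 2 = p + q - 2*r := by
    rw [hpdef, hqdef, hrdef]; exact absq_sub' a b
  have hm0 : 0 < p + q - 2*r := hm' ▸ pow_pos habs 2
  have hA0 : 0 < A := by
    have h2 : 0 < A ^ 2 := by linarith [hA2, hm0, mul_pos hal hbe]
    have h0 : 0 ≤ A := hAdef ▸ norm_nonneg _
    rcases h0.eq_or_lt with h | h
    · exfalso; rw [← h] at h2; simp at h2
    · exact h
  have hD0 : 0 < 1 - p*q + A*s := by
    have h1 : p*q ≤ p := mul_le_of_le_one_right hp0 hq1.le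
    have h2 := mul_pos hA0 hs0
    linarith
  have hDC : ((1-p*q+A*s : ℝ):ℂ) ≠ 0 := Complex.ofReal_ne_zero.2 (ne_of_gt hD0)
  have hDC2 : (1 - (p:ℂ)*(q:ℂ) + (A:ℂ)*(s:ℂ)) ≠ 0 := by
    have : ((1-p*q+A*s : ℝ):ℂ) = 1 - (p:ℂ)*(q:ℂ) + (A:ℂ)*(s:ℂ) := by push_cast; ring
    rw [← this]; exact hDC
  have hW := absq_comb a b (1-p) (1-q)
  rw [← hpdef, ← hqdef, ← hrdef] at hW
  have hzabs : ‖z‖ ^ 2 =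
      (q*(1-p)^2+p*(1-q)^2+2*r*(1-p)*(1-q)) / (1-p*q+A*s)^2 := by
    rw [hz2, norm_div, Complex.norm_real, Real.norm_eq_abs, abs_of_pos hD0, div_pow, hW]
  have hI1 := algI1 p q r A s hs2 hA2
  -- goal 1
  have g1 : ‖z‖ < 1 := by
    have h2 : ‖z‖ ^ 2 < 1 ^ 2 := by
      rw [hzabs, one_pow, div_lt_one (by positivity)]
      have h3 := mul_pos (mul_pos hA0 hs0) hD0
      linarith [hI1]
    exact lt_of_pow_lt_pow_left₀ 2 zero_le_one h2
  -- 1 - |z|^2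
  have h1z : 1 - ‖z‖ ^ 2 = 2*A*s / (1-p*q+A*s) := by
    rw [hzabs]
    have key : ∀ N D : ℝ, D ≠ 0 → D^2 - N = 2*A*s*D → 1 - N / D^2 = 2*A*s/D := by
      intro N D hD h; field_simp; linear_combination h
    exact key _ _ hD0.ne' hI1
  have h1z0 : 0 < 1 - ‖z‖ ^ 2 := by
    rw [h1z]; exact div_pos (by linarith [mul_pos hA0 hs0]) hD0
  -- |a - z|^2
  have haz : a - z = (a * ((1-p*q+A*s:ℝ):ℂ) - (b * ((1-p:ℝ):ℂ) + a * ((1-q:ℝ):ℂ))) /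
      ((1-p*q+A*s:ℝ):ℂ) := by
    rw [hz2]; field_simp [hDC2]
  have hNa' := absq_a_sub a b (1-p) (1-q) (1-p*q+A*s)
  rw [← hpdef, ← hqdef, ← hrdef] at hNa'
  have hNa : ‖a - z‖ ^ 2 =
      (p*(1-p*q+A*s)^2 - 2*(1-p*q+A*s)*((1-p)*r+(1-q)*p)
        + (q*(1-p)^2+p*(1-q)^2+2*r*(1-p)*(1-q))) / (1-p*q+A*s)^2 := by
    rw [haz, norm_div, Complex.norm_real, Real.norm_eq_abs, abs_of_pos hD0, div_pow, hNa']
  have hzb : z - b = ((b * ((1-p:ℝ):ℂ) + a * ((1-q:ℝ):ℂ)) - b * ((1-p*q+A*s:ℝ):ℂ)) /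
      ((1-p*q+A*s:ℝ):ℂ) := by
    rw [hz2]; field_simp [hDC2]
  have hNb' := absq_sub_b a b (1-p) (1-q) (1-p*q+A*s)
  rw [← hpdef, ← hqdef, ← hrdef] at hNb'
  have hNb : ‖z - b‖ ^ 2 =
      (q*(1-p*q+A*s)^2 - 2*(1-p*q+A*s)*((1-p)*q+(1-q)*r)
        + (q*(1-p)^2+p*(1-q)^2+2*r*(1-p)*(1-q))) / (1-p*q+A*s)^2 := by
    rw [hzb, norm_div, Complex.norm_real, Real.norm_eq_abs, abs_of_pos hD0, div_pow, hNb']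
  have hNa0 : 0 ≤ p*(1-p*q+A*s)^2 - 2*(1-p*q+A*s)*((1-p)*r+(1-q)*p)
        + (q*(1-p)^2+p*(1-q)^2+2*r*(1-p)*(1-q)) := by
    have h2 : p*(1-p*q+A*s)^2 - 2*(1-p*q+A*s)*((1-p)*r+(1-q)*p)
        + (q*(1-p)^2+p*(1-q)^2+2*r*(1-p)*(1-q))
        = ‖a - z‖ ^ 2 * (1-p*q+A*s)^2 := by
      rw [hNa]; field_simp
    rw [h2]; positivity
  have hK : 0 < 2*A*s*(1-p)*(1-p*q+A*s) := by
    have h3 := mul_pos (mul_pos (mul_pos hA0 hs0) hal) hD0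
    linarith
  -- goal 2
  have hL : ‖a - z‖ ^ 2 / ((1-p) * (1 - ‖z‖ ^ 2)) =
      (p*(1-p*q+A*s)^2 - 2*(1-p*q+A*s)*((1-p)*r+(1-q)*p)
        + (q*(1-p)^2+p*(1-q)^2+2*r*(1-p)*(1-q))) / (2*A*s*(1-p)*(1-p*q+A*s)) := by
    rw [hNa, h1z]
    field_simp
  have hR : ‖z - b‖ ^ 2 / ((1 - ‖z‖ ^ 2) * (1-q)) =
      (q*(1-p*q+A*s)^2 - 2*(1-p*q+A*s)*((1-p)*q+(1-q)*r)
        + (q*(1-p)^2+p*(1-q)^2+2*r*(1-p)*(1-q))) / (2*A*s*(1-q)*(1-p*q+A*s)) := by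
    rw [hNb, h1z]
    field_simp
  have hK' : 0 < 2*A*s*(1-q)*(1-p*q+A*s) := by
    have h3 := mul_pos (mul_pos (mul_pos hA0 hs0) hbe) hD0
    linarith
  have g2 : ‖a - z‖ ^ 2 / ((1-p) * (1 - ‖z‖ ^ 2)) =
      ‖z - b‖ ^ 2 / ((1 - ‖z‖ ^ 2) * (1-q)) := by
    rw [hL, hR, div_eq_div_iff (ne_of_gt hK) (ne_of_gt hK')]
    linear_combination (2*A*s*(1-p*q+A*s)) * algI2 p q r A s hs2 hA2
  -- goal 3
  have g3 : hypDist a z = hypDist a b / 2 := by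
    have hY : 0 < (1-p) * (1 - ‖z‖ ^ 2) := mul_pos hal h1z0
    set u : ℝ := ‖a - z‖ / Real.sqrt ((1-p) * (1 - ‖z‖ ^ 2)) with hu
    have hu0 : 0 ≤ u := by
      rw [hu]; exact div_nonneg (norm_nonneg _) (Real.sqrt_nonneg _)
    have hu2 : u ^ 2 = (p*(1-p*q+A*s)^2 - 2*(1-p*q+A*s)*((1-p)*r+(1-q)*p)
        + (q*(1-p)^2+p*(1-q)^2+2*r*(1-p)*(1-q))) / (2*A*s*(1-p)*(1-p*q+A*s)) := by
      rw [hu, div_pow, Real.sq_sqrt hY.le]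
      exact hL
    have ht2 : (‖a - b‖ / s) ^ 2 = 4 * u^2 * (1 + u^2) := by
      rw [div_pow, hm', hu2]
      rw [div_eq_iff (by positivity)]
      have key : ∀ N K s : ℝ, K ≠ 0 → 4 * (N / K) * (1 + N / K) * s^2 = 4*s^2*N*(K+N) / K^2 := by
        intro N K s hKne; rw [eq_div_iff (pow_ne_zero 2 hKne)]; field_simp
      rw [key _ _ _ (ne_of_gt hK), eq_div_iff (pow_ne_zero 2 (ne_of_gt hK))]
      linear_combination (4 * s^2) * algI3 p q r A s hs2 hA2
    have hT : ‖a - b‖ / s = Real.sinh (2 * Real.arsinh u) := by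
      have hsinh : Real.sinh (2 * Real.arsinh u) = 2 * u * Real.sqrt (1 + u^2) := by
        rw [Real.sinh_two_mul, Real.sinh_arsinh, Real.cosh_arsinh]
      have h10 : 0 ≤ Real.sinh (2 * Real.arsinh u) := by
        rw [hsinh]; positivity
      have h20 : 0 ≤ ‖a - b‖ / s := div_nonneg (norm_nonneg _) hs0.le
      have hsq : (‖a - b‖ / s) ^ 2 = (Real.sinh (2 * Real.arsinh u)) ^ 2 := by
        rw [ht2, hsinh, mul_pow, mul_pow, Real.sq_sqrt (by positivity)]
        ring
      calc ‖a - b‖ / s = Real.sqrt ((‖a - b‖ / s)^2) :=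
            (Real.sqrt_sq h20).symm
        _ = Real.sqrt ((Real.sinh (2 * Real.arsinh u))^2) := by rw [hsq]
        _ = Real.sinh (2 * Real.arsinh u) := Real.sqrt_sq h10
    simp only [hypDist]
    rw [← hpdef, ← hqdef, ← hsdef]
    rw [← hu, hT, Real.arsinh_sinh]
    ring
  exact ⟨g1, g2, g3⟩

theorem hyperbolic_midpoint_formula (a b : ℂ)
    (ha : ‖a‖ < 1) (hb : ‖b‖ < 1) (hab : a ≠ b) :
    let z := (b * (1 - (‖a‖ ^ 2 : ℝ)) + a * (1 - (‖b‖ ^ 2 : ℝ))) /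
      ((1 - ‖a‖ ^ 2 * ‖b‖ ^ 2
        + ‖1 - a * starRingEnd ℂ b‖ *
          Real.sqrt ((1 - ‖a‖ ^ 2) * (1 - ‖b‖ ^ 2)) : ℝ) : ℂ)
    ‖z‖ < 1 ∧
      ‖a - z‖ ^ 2 / ((1 - ‖a‖ ^ 2) * (1 - ‖z‖ ^ 2)) =
        ‖z - b‖ ^ 2 / ((1 - ‖z‖ ^ 2) * (1 - ‖b‖ ^ 2)) ∧
      hypDist a z = hypDist a b / 2 := by
  have hp1 : ‖a‖ ^ 2 < 1 := pow_lt_one₀ (norm_nonneg a) ha two_ne_zero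
  have hq1 : ‖b‖ ^ 2 < 1 := pow_lt_one₀ (norm_nonneg b) hb two_ne_zero
  intro z
  exact core a b _ _ _ _ _ rfl rfl rfl rfl rfl hp1 hq1 hab
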